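/- Let M be a binary matroid, let C = {e₁, e₂, e₃} be a circuit of M, and let F ⊆ E(M) \ C be a set of minimum weight (with respect to a weight function w : E(M) → ℕ) such that M has circuits C₁ and C₂ with e₁ ∈ C₁ ⊆ F ∪ {e₁} and e₂ ∈ C₂ ⊆ F ∪ {e₂}. Then M also has a circuit C₃ with e₃ ∈ C₃ ⊆ F ∪ {e₃}. -/
import Mathlib


open Set

variable {α : Type*}

/-- A circuit of a matroid: an inclusion-minimal dependent set. -/
def MCircuit (M : Matroid α) (C : Set α) : Prop :=
  M.Dep C ∧ ∀ C' ⊂ C, M.Indep C'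

/-- A binary matroid: one representable over GF(2). -/
def IsBinary (M : Matroid α) : Prop :=
  ∃ (n : ℕ) (φ : α → (Fin n → ZMod 2)),
    ∀ I ⊆ M.E, (M.Indep I ↔ LinearIndependent (ZMod 2) (fun x : I => φ x))

/-- A cycle of a matroid: a (possibly empty) disjoint union of circuits. -/
def MCycle (M : Matroid α) (C : Set α) : Prop :=
  ∃ 𝒞 : Set (Set α), (∀ D ∈ 𝒞, MCircuit M D) ∧ 𝒞.Pairwise Disjoint ∧ C = ⋃₀ 𝒞

/-- Deletion of a set of elements from a matroid. -/
def MDelete (M : Matroid α) (D : Set α) : Matroid α := M.restrict (M.E \ D)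

/-- The rank of a matroid: the supremum of sizes of independent sets. -/
noncomputable def mRank (M : Matroid α) : ℕ := sSup (Set.ncard '' {I | M.Indep I})

section Aux

variable {M : Matroid α} {n : ℕ} {φ : α → (Fin n → ZMod 2)}

lemma zmod2_eq_one : ∀ a : ZMod 2, a ≠ 0 → a = 1 := by decide

lemma zmod2_add_self (v : Fin n → ZMod 2) : v + v = 0 :=
  funext fun i => by
    have h : ∀ a : ZMod 2, a + a = 0 := by decide
    simpa using h (v i)

lemma dep_of_sum_zero
    (hφ : ∀ I ⊆ M.E, (M.Indep I ↔ LinearIndependent (ZMod 2) (fun x : I => φ x)))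
    (T : Finset α) (hTE : ↑T ⊆ M.E) (hne : T.Nonempty) (hsum : ∑ x ∈ T, φ x = 0) :
    M.Dep ↑T := by
  rw [Matroid.dep_iff]
  refine ⟨fun hI => ?_, hTE⟩
  rw [hφ _ hTE] at hI
  obtain ⟨e, he⟩ := hne
  have h0 := Fintype.linearIndependent_iff.mp hI (fun _ => 1) ?_ ⟨e, he⟩
  · exact one_ne_zero h0
  · simpa [Finset.sum_coe_sort, Finset.sum_attach] using hsum

lemma circuit_sum
    (hφ : ∀ I ⊆ M.E, (M.Indep I ↔ LinearIndependent (ZMod 2) (fun x : I => φ x)))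
    {C : Set α} (hC : MCircuit M C) :
    ∃ S : Finset α, ↑S = C ∧ ∑ x ∈ S, φ x = 0 := by
  classical
  have hCE : C ⊆ M.E := hC.1.subset_ground
  have hdep : ¬ LinearIndependent (ZMod 2) (fun x : C => φ x) := by
    intro h
    exact hC.1.not_indep ((hφ C hCE).mpr h)
  rw [not_linearIndependent_iff] at hdep
  obtain ⟨s, g, hrel, i₀, hi₀s, hi₀⟩ := hdep
  set s' : Finset C := s.filter (fun i => g i ≠ 0) with hs'
  have hsum' : ∑ i ∈ s', φ (i : α) = 0 := by
    rw [← hrel]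
    rw [← Finset.sum_filter_add_sum_filter_not s (fun i => g i ≠ 0) (fun i => g i • φ (i : α))]
    have h1 : ∑ i ∈ s', g i • φ (i : α) = ∑ i ∈ s', φ (i : α) := by
      refine Finset.sum_congr rfl fun i hi => ?_
      rw [zmod2_eq_one _ (Finset.mem_filter.mp hi).2, one_smul]
    have h2 : ∑ i ∈ s.filter (fun i => ¬ g i ≠ 0), g i • φ (i : α) = 0 := by
      refine Finset.sum_eq_zero fun i hi => ?_
      have := (Finset.mem_filter.mp hi).2
      push_neg at this
      rw [this, zero_smul]
    rw [h2, add_zero, h1]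
  set S : Finset α := s'.image Subtype.val with hS
  have hsumS : ∑ x ∈ S, φ x = 0 := by
    rw [hS, Finset.sum_image (fun a _ b _ h => Subtype.val_injective h)]
    exact hsum'
  have hSC : (↑S : Set α) ⊆ C := by
    intro x hx
    simp only [hS, Finset.coe_image, Finset.mem_coe] at hx
    obtain ⟨i, _, rfl⟩ := hx
    exact i.2
  have hSne : S.Nonempty := ⟨i₀, Finset.mem_image_of_mem _ (Finset.mem_filter.mpr ⟨hi₀s, hi₀⟩)⟩
  have hdepS : M.Dep ↑S := dep_of_sum_zero hφ S (hSC.trans hCE) hSne hsumS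
  have hEq : (↑S : Set α) = C := by
    by_contra hne
    exact (hC.2 ↑S (HasSubset.Subset.ssubset_of_ne hSC hne)).not_dep hdepS
  exact ⟨S, hEq, hsumS⟩

lemma exists_circuit_subset :
    ∀ (X : Finset α), ↑X ⊆ M.E → M.Dep (↑X : Set α) → ∃ s : Finset α, s ⊆ X ∧ MCircuit M ↑s := by
  classical
  intro X
  induction X using Finset.strongInductionOn with
  | _ X ih =>
    intro hXE hdep
    by_cases h : ∀ C' ⊂ (↑X : Set α), M.Indep C'
    · exact ⟨X, subset_rfl, hdep, h⟩
    · push_neg at h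
      obtain ⟨C', hss, hni⟩ := h
      have hfin : C'.Finite := X.finite_toSet.subset hss.subset
      have hYX : hfin.toFinset ⊂ X := by
        rw [← Finset.coe_ssubset, hfin.coe_toFinset]; exact hss
      obtain ⟨s, hs, hc⟩ := ih _ hYX
        (by rw [hfin.coe_toFinset]; exact hss.subset.trans hXE)
        (by rw [hfin.coe_toFinset]; exact Matroid.dep_iff.mpr ⟨hni, hss.subset.trans hXE⟩)
      exact ⟨s, hs.trans hYX.subset, hc⟩

lemma exists_circuit_mem
    (hφ : ∀ I ⊆ M.E, (M.Indep I ↔ LinearIndependent (ZMod 2) (fun x : I => φ x))) :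
    ∀ (X : Finset α) (e : α), ↑X ⊆ M.E → (∑ x ∈ X, φ x = 0) → e ∈ X →
      ∃ C, MCircuit M C ∧ e ∈ C ∧ C ⊆ ↑X := by
  classical
  intro X
  induction X using Finset.strongInductionOn with
  | _ X ih =>
    intro e hXE hsum he
    have hdep := dep_of_sum_zero hφ X hXE ⟨e, he⟩ hsum
    obtain ⟨s, hsX, hcirc⟩ := exists_circuit_subset X hXE hdep
    by_cases hes : e ∈ s
    · exact ⟨↑s, hcirc, hes, Finset.coe_subset.mpr hsX⟩
    · obtain ⟨S, hSeq, hSsum⟩ := circuit_sum hφ hcirc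
      have hSs : S = s := Finset.coe_injective hSeq
      rw [hSs] at hSsum
      have hsub : ∑ x ∈ X \ s, φ x = 0 := by
        have h := Finset.sum_sdiff hsX (f := φ)
        rw [hsum, hSsum, add_zero] at h
        exact h
      have hne : s.Nonempty := by
        have := hcirc.1.nonempty
        obtain ⟨x, hx⟩ := this
        exact ⟨x, hx⟩
      have hss : X \ s ⊂ X := Finset.sdiff_ssubset hsX hne
      obtain ⟨C, hCc, heC, hCs⟩ := ih _ hss e ((Finset.coe_subset.mpr hss.subset).trans hXE)
        hsub (Finset.mem_sdiff.mpr ⟨he, hes⟩)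
      exact ⟨C, hCc, heC, hCs.trans (Finset.coe_subset.mpr hss.subset)⟩

lemma sum_symmDiff [DecidableEq α] (s t : Finset α) :
    ∑ x ∈ symmDiff s t, φ x = ∑ x ∈ s, φ x + ∑ x ∈ t, φ x := by
  have hd : Disjoint (s \ t) (t \ s) := disjoint_sdiff_sdiff
  have h1 : ∑ x ∈ symmDiff s t, φ x = ∑ x ∈ s \ t, φ x + ∑ x ∈ t \ s, φ x := by
    rw [symmDiff_def, Finset.sup_eq_union, Finset.sum_union hd]
  have h2 := Finset.sum_sdiff (f := φ) (Finset.inter_subset_left (s₁ := s) (s₂ := t))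
  rw [Finset.sdiff_inter_self_left] at h2
  have h3 := Finset.sum_sdiff (f := φ) (Finset.inter_subset_left (s₁ := t) (s₂ := s))
  rw [Finset.sdiff_inter_self_left] at h3
  rw [← h2, ← h3, Finset.inter_comm t s, h1, add_add_add_comm, zmod2_add_self, add_zero]

end Aux

theorem triangle_min_weight_spans_third (M : Matroid α) (hM : IsBinary M) (w : α → ℕ)
    (e₁ e₂ e₃ : α) (h12 : e₁ ≠ e₂) (h13 : e₁ ≠ e₃) (h23 : e₂ ≠ e₃)
    (hC : MCircuit M {e₁, e₂, e₃}) (F : Finset α)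
    (hF : (F : Set α) ⊆ M.E \ {e₁, e₂, e₃})
    (h1 : ∃ C₁, MCircuit M C₁ ∧ e₁ ∈ C₁ ∧ C₁ ⊆ ↑F ∪ {e₁})
    (h2 : ∃ C₂, MCircuit M C₂ ∧ e₂ ∈ C₂ ∧ C₂ ⊆ ↑F ∪ {e₂})
    (hmin : ∀ F' : Finset α, (F' : Set α) ⊆ M.E \ {e₁, e₂, e₃} →
      (∃ C₁, MCircuit M C₁ ∧ e₁ ∈ C₁ ∧ C₁ ⊆ ↑F' ∪ {e₁}) →
      (∃ C₂, MCircuit M C₂ ∧ e₂ ∈ C₂ ∧ C₂ ⊆ ↑F' ∪ {e₂}) →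
      ∑ x ∈ F, w x ≤ ∑ x ∈ F', w x) :
    ∃ C₃, MCircuit M C₃ ∧ e₃ ∈ C₃ ∧ C₃ ⊆ ↑F ∪ {e₃} := by
  classical
  obtain ⟨n, φ, hφ⟩ := hM
  obtain ⟨C₁, hC₁, he₁, hC₁sub⟩ := h1
  obtain ⟨C₂, hC₂, he₂, hC₂sub⟩ := h2
  -- basic membership facts about F
  have hFmem : ∀ x ∈ (F : Set α), x ≠ e₁ ∧ x ≠ e₂ ∧ x ≠ e₃ := by
    intro x hx
    have := (hF hx).2
    simp only [Set.mem_insert_iff, Set.mem_singleton_iff] at this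
    push_neg at this
    exact this
  have he₁F : e₁ ∉ (F : Set α) := fun h => (hFmem _ h).1 rfl
  have he₂F : e₂ ∉ (F : Set α) := fun h => (hFmem _ h).2.1 rfl
  have he₃F : e₃ ∉ (F : Set α) := fun h => (hFmem _ h).2.2 rfl
  -- finiteness of the circuits
  have hfin1 : C₁.Finite := (F.finite_toSet.union (Set.finite_singleton e₁)).subset hC₁sub
  have hfin2 : C₂.Finite := (F.finite_toSet.union (Set.finite_singleton e₂)).subset hC₂sub
  set s₁ : Finset α := hfin1.toFinset with hs₁def
  set s₂ : Finset α := hfin2.toFinset with hs₂def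
  set s₀ : Finset α := {e₁, e₂, e₃} with hs₀def
  have hs₁ : (↑s₁ : Set α) = C₁ := hfin1.coe_toFinset
  have hs₂ : (↑s₂ : Set α) = C₂ := hfin2.coe_toFinset
  have hs₀ : (↑s₀ : Set α) = ({e₁, e₂, e₃} : Set α) := by simp [hs₀def]
  -- the three sums are zero
  obtain ⟨S₁, hS₁eq, hS₁⟩ := circuit_sum hφ hC₁
  have hsum₁ : ∑ x ∈ s₁, φ x = 0 := by
    rwa [Finset.coe_injective (hS₁eq.trans hs₁.symm)] at hS₁
  obtain ⟨S₂, hS₂eq, hS₂⟩ := circuit_sum hφ hC₂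
  have hsum₂ : ∑ x ∈ s₂, φ x = 0 := by
    rwa [Finset.coe_injective (hS₂eq.trans hs₂.symm)] at hS₂
  obtain ⟨S₀, hS₀eq, hS₀⟩ := circuit_sum hφ hC
  have hsum₀ : ∑ x ∈ s₀, φ x = 0 := by
    rwa [Finset.coe_injective (hS₀eq.trans hs₀.symm)] at hS₀
  -- the symmetric difference
  set D : Finset α := symmDiff (symmDiff s₁ s₂) s₀ with hDdef
  have hDsum : ∑ x ∈ D, φ x = 0 := by
    rw [hDdef, sum_symmDiff, sum_symmDiff, hsum₁, hsum₂, hsum₀, add_zero, add_zero]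
  -- membership facts
  have he₃s₁ : e₃ ∉ s₁ := by
    rw [hs₁def, Set.Finite.mem_toFinset]
    intro h
    rcases hC₁sub h with h | h
    · exact he₃F h
    · exact h13 h.symm
  have he₃s₂ : e₃ ∉ s₂ := by
    rw [hs₂def, Set.Finite.mem_toFinset]
    intro h
    rcases hC₂sub h with h | h
    · exact he₃F h
    · exact h23 h.symm
  have he₁s₁ : e₁ ∈ s₁ := by rw [hs₁def, Set.Finite.mem_toFinset]; exact he₁
  have he₂s₂ : e₂ ∈ s₂ := by rw [hs₂def, Set.Finite.mem_toFinset]; exact he₂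
  have he₁s₂ : e₁ ∉ s₂ := by
    rw [hs₂def, Set.Finite.mem_toFinset]
    intro h
    rcases hC₂sub h with h | h
    · exact he₁F h
    · exact h12 h
  have he₂s₁ : e₂ ∉ s₁ := by
    rw [hs₁def, Set.Finite.mem_toFinset]
    intro h
    rcases hC₁sub h with h | h
    · exact he₂F h
    · exact h12 h.symm
  have he₃D : e₃ ∈ D := by
    rw [hDdef, Finset.mem_symmDiff]
    right
    refine ⟨by simp [hs₀def], ?_⟩
    rw [Finset.mem_symmDiff]
    push_neg
    exact ⟨fun h => absurd h he₃s₁, fun h => absurd h he₃s₂⟩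
  -- D ⊆ F ∪ {e₃}
  have hDF : (↑D : Set α) ⊆ ↑F ∪ {e₃} := by
    intro x hx
    rw [Finset.mem_coe, hDdef, Finset.mem_symmDiff] at hx
    rcases hx with ⟨hx12, hx0⟩ | ⟨hx0, hx12⟩
    · -- x in symmDiff s₁ s₂, x not in {e₁,e₂,e₃}
      have hx0' : x ≠ e₁ ∧ x ≠ e₂ ∧ x ≠ e₃ := by
        simp only [hs₀def, Finset.mem_insert, Finset.mem_singleton] at hx0
        push_neg at hx0
        exact hx0
      rw [Finset.mem_symmDiff] at hx12
      left
      rcases hx12 with ⟨hx1, _⟩ | ⟨hx2, _⟩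
      · have : x ∈ C₁ := by rwa [hs₁def, Set.Finite.mem_toFinset] at hx1
        rcases hC₁sub this with h | h
        · exact h
        · exact absurd h hx0'.1
      · have : x ∈ C₂ := by rwa [hs₂def, Set.Finite.mem_toFinset] at hx2
        rcases hC₂sub this with h | h
        · exact h
        · exact absurd h hx0'.2.1
    · -- x ∈ {e₁,e₂,e₃}, x ∉ symmDiff s₁ s₂
      simp only [hs₀def, Finset.mem_insert, Finset.mem_singleton] at hx0
      rcases hx0 with rfl | rfl | rfl
      · exact absurd (Finset.mem_symmDiff.mpr (Or.inl ⟨he₁s₁, he₁s₂⟩)) hx12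
      · exact absurd (Finset.mem_symmDiff.mpr (Or.inr ⟨he₂s₂, he₂s₁⟩)) hx12
      · right; rfl
  -- D ⊆ M.E
  have he₃E : e₃ ∈ M.E := hC.1.subset_ground (by simp)
  have hDE : (↑D : Set α) ⊆ M.E := by
    intro x hx
    rcases hDF hx with h | h
    · exact (hF h).1
    · rw [Set.mem_singleton_iff] at h; subst h; exact he₃E
  obtain ⟨C₃, hc, hm, hsub⟩ := exists_circuit_mem hφ D e₃ hDE hDsum he₃D
  exact ⟨C₃, hc, hm, hsub.trans hDF⟩
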